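/- Suppose i ≡ 0 (mod 3) and j ≢ 0 (mod 3), and let (A',B') be an optimal alignment between A[1..i] and B[1..j] in which the last column aligns B[j] with a gap. Then D(i,j) = D(i,j−1), i.e., removing the last column yields an optimal alignment of A[1..i] and B[1..j−1] of the same score. -/

import Mathlib

/-- A nucleotide: one of the four letters a, c, g, t. -/
abbrev Nuc := Fin 4

/-- A column entry of an alignment: a nucleotide or a gap symbol '-' (`none`). -/
abbrev Col := Option Nuc

/-- `(A', B')` is an alignment between DNA sequences `A` and `B`:
both rows have the same length, no column consists of two gaps, and
removing the gaps from `A'` (resp. `B'`) yields `A` (resp. `B`). -/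
def isAlignment (A B : List Nuc) (A' B' : List Col) : Prop :=
  A'.length = B'.length ∧
  (∀ p ∈ A'.zip B', p.1 ≠ none ∨ p.2 ≠ none) ∧
  A'.filterMap id = A ∧ B'.filterMap id = B

attribute [local instance] Classical.propDecidable

noncomputable section

/-- Number of non-gap symbols among the first `k` columns of a row `S`. -/
def nongap (S : List Col) (k : ℕ) : ℕ := ((S.take k).filterMap id).length

/-- The codon of the underlying sequence of row `S` ending at column `k`
(0-based) is *grouped*: columns `k-2`, `k-1`, `k` are all non-gap and the
non-gap symbol at column `k` is the last nucleotide of a codon (its 1-based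
position in the underlying sequence is a multiple of 3). -/
def isCodonEnd (S : List Col) (k : ℕ) : Prop :=
  2 ≤ k ∧ k < S.length ∧
  (S.getD (k-2) none).isSome ∧ (S.getD (k-1) none).isSome ∧ (S.getD k none).isSome ∧
  nongap S (k+1) % 3 = 0

/-- `M_{A→B}`: end columns of matching codons (a grouped codon of `A`
aligned exactly with a grouped codon of `B`). -/
def Mset (A' B' : List Col) : Finset ℕ :=
  (Finset.range A'.length).filter fun k => isCodonEnd A' k ∧ isCodonEnd B' k

/-- `U_{A→B}`: end columns of unmatching codons (a grouped codon of `A`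
aligned with three non-gap symbols of `B` not forming a codon of `B`). -/
def Uset (A' B' : List Col) : Finset ℕ :=
  (Finset.range A'.length).filter fun k =>
    isCodonEnd A' k ∧ ¬ isCodonEnd B' k ∧
    (B'.getD (k-2) none).isSome ∧ (B'.getD (k-1) none).isSome ∧ (B'.getD k none).isSome

/-- `Indel_{A→B}`: end columns of deleted codons (a grouped codon of `A`
aligned with three gap symbols). -/
def IndelSet (A' B' : List Col) : Finset ℕ :=
  (Finset.range A'.length).filter fun k =>
    isCodonEnd A' k ∧
    B'.getD (k-2) none = none ∧ B'.getD (k-1) none = none ∧ B'.getD k none = none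

/-- `MFS_{A→B}`: columns of matching nucleotides belonging to frameshift
codons of `A`. -/
def MFSset (A' B' : List Col) : Finset ℕ :=
  (Finset.range A'.length).filter fun k =>
    (∀ d ∈ ({k, k+1, k+2} : Finset ℕ),
        d ∉ Mset A' B' ∪ Uset A' B' ∪ IndelSet A' B') ∧
    (A'.getD k none).isSome ∧ (B'.getD k none).isSome

/-- Codon indices (0-based, among the `|A|/3` codons of `A`) of the
frameshift codons of `A`: codons whose end column is counted in none of
`M`, `U`, `Indel`. -/
def FScodons (A' B' : List Col) : Finset ℕ :=
  (Finset.range ((A'.filterMap id).length / 3)).filter fun i =>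
    ∀ k ∈ Mset A' B' ∪ Uset A' B' ∪ IndelSet A' B', nongap A' (k+1) ≠ 3 * (i+1)

/-- The triple of nucleotides of row `S` at columns `k-2`, `k-1`, `k`. -/
def triAt (S : List Col) (k : ℕ) : Nuc × Nuc × Nuc :=
  ((S.getD (k-2) none).getD 0, (S.getD (k-1) none).getD 0, (S.getD k none).getD 0)

/-- The nucleotide of row `S` at column `k`. -/
def nucAt (S : List Col) (k : ℕ) : Nuc := (S.getD k none).getD 0

/-- The scoring scheme: an amino-acid (codon) scoring function, a nucleotide
scoring function, and the gap, frameshift-opening and frameshift-extension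
costs. -/
structure ScoreParams where
  saa : Nuc × Nuc × Nuc → Nuc × Nuc × Nuc → ℝ
  san : Nuc → Nuc → ℝ
  gap_cost : ℝ
  fs_open_cost : ℝ
  fs_ext_cost : ℝ

/-- `score(A')`, the half of the score of the alignment contributed by the
codons of `A`. -/
def halfScore (P : ScoreParams) (A' B' : List Col) : ℝ :=
  (∑ k ∈ Mset A' B', P.saa (triAt A' k) (triAt B' k) / 2) +
  (∑ k ∈ Uset A' B', (P.saa (triAt A' k) (triAt B' k) / 2 + P.fs_ext_cost)) +
  ((IndelSet A' B').card : ℝ) * P.gap_cost +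
  ((((A'.filterMap id).length / 3 : ℕ) : ℝ) - ((Mset A' B').card : ℝ)
      - ((Uset A' B').card : ℝ) - ((IndelSet A' B').card : ℝ)) * P.fs_open_cost +
  (∑ k ∈ MFSset A' B', P.san (nucAt A' k) (nucAt B' k) / 2)

/-- The score of an alignment `(A',B')`: `score(A') + score(B')`. -/
def score (P : ScoreParams) (A' B' : List Col) : ℝ :=
  halfScore P A' B' + halfScore P B' A'

/-- `D(i,j)`: the maximal score of an alignment between the prefixes
`A[1..i]` and `B[1..j]`. -/
def Dopt (P : ScoreParams) (A B : List Nuc) (i j : ℕ) : ℝ :=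
  sSup { s | ∃ A' B', isAlignment (A.take i) (B.take j) A' B' ∧ s = score P A' B' }

end

section Aux

lemma getD_dropLast (S : List Col) (k : ℕ) (hk : k < S.length - 1) :
    S.dropLast.getD k none = S.getD k none := by
  rw [List.dropLast_eq_take]
  simp only [List.getD_eq_getElem?_getD, List.getElem?_take, hk, if_pos]

lemma take_dropLast' (S : List Col) (k : ℕ) (hk : k ≤ S.length - 1) :
    S.dropLast.take k = S.take k := by
  rw [List.dropLast_eq_take, List.take_take, min_eq_left hk]

lemma nongap_dropLast (S : List Col) (k : ℕ) (hk : k ≤ S.length - 1) :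
    nongap S.dropLast k = nongap S k := by
  unfold nongap; rw [take_dropLast' _ _ hk]

lemma isCodonEnd_dropLast (S : List Col) (k : ℕ) (hk : k < S.length - 1) :
    isCodonEnd S.dropLast k ↔ isCodonEnd S k := by
  unfold isCodonEnd
  rw [List.length_dropLast, getD_dropLast _ _ (by omega), getD_dropLast _ _ (by omega),
    getD_dropLast _ _ hk, nongap_dropLast _ _ (by omega)]
  constructor <;> rintro ⟨h1, h2, h⟩ <;> exact ⟨h1, by omega, h⟩

lemma triAt_dropLast (S : List Col) (k : ℕ) (hk : k < S.length - 1) :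
    triAt S.dropLast k = triAt S k := by
  unfold triAt
  rw [getD_dropLast _ _ (by omega), getD_dropLast _ _ (by omega), getD_dropLast _ _ hk]

lemma nucAt_dropLast (S : List Col) (k : ℕ) (hk : k < S.length - 1) :
    nucAt S.dropLast k = nucAt S k := by
  unfold nucAt; rw [getD_dropLast _ _ hk]

lemma filter_range_shrink (n : ℕ) (p q : ℕ → Prop) {_ : DecidablePred p} {_ : DecidablePred q}
    (h1 : ∀ k, k < n - 1 → (p k ↔ q k)) (h2 : ¬ q (n - 1)) :
    (Finset.range (n-1)).filter p = (Finset.range n).filter q := by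
  ext k
  simp only [Finset.mem_filter, Finset.mem_range]
  constructor
  · rintro ⟨hk, hp⟩
    exact ⟨by omega, (h1 k hk).1 hp⟩
  · rintro ⟨hk, hq⟩
    rcases lt_or_ge k (n-1) with h | h
    · exact ⟨h, (h1 k h).2 hq⟩
    · have : k = n - 1 := by omega
      subst this; exact absurd hq h2

lemma concat_of_getLast? {l : List Col} {a : Col} (h : l.getLast? = some a) :
    l.dropLast ++ [a] = l := by
  have hne : l ≠ [] := fun e => by simp [e] at h
  have h2 : l.getLast hne = a := by
    rw [List.getLast?_eq_getLast hne] at h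
    exact Option.some.inj h
  rw [← h2]; exact List.dropLast_append_getLast hne

end Aux

section Aux2

lemma filterMap_dropLast_none {l : List Col} (h : l.getLast? = some none) :
    l.dropLast.filterMap id = l.filterMap id := by
  conv_rhs => rw [← concat_of_getLast? h]
  simp

lemma filterMap_dropLast_some {l : List Col} {x : Nuc} (h : l.getLast? = some (some x)) :
    l.filterMap id = l.dropLast.filterMap id ++ [x] := by
  conv_lhs => rw [← concat_of_getLast? h]
  simp

lemma score_dropLast (P : ScoreParams) (A' B' : List Col) (x : Nuc)
    (hlen : A'.length = B'.length)
    (hlA : A'.getLast? = some none)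
    (hlB : B'.getLast? = some (some x))
    (h3 : (B'.filterMap id).length % 3 ≠ 0) :
    score P A'.dropLast B'.dropLast = score P A' B' := by
  have hne : A' ≠ [] := fun e => by simp [e] at hlA
  have hn1 : 1 ≤ A'.length := List.length_pos_iff.2 hne
  have hBn : B'.length = A'.length := hlen.symm
  have hAnone : A'.getD (A'.length - 1) none = none := by
    rw [List.getD_eq_getElem?_getD, ← List.getLast?_eq_getElem?, hlA]; rfl
  have hnB : nongap B' A'.length % 3 ≠ 0 := by
    unfold nongap
    rw [← hBn, List.take_length]
    exact h3
  have hnceA : ¬ isCodonEnd A' (A'.length - 1) := by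
    rintro ⟨-, -, -, -, hs, -⟩; rw [hAnone] at hs; simp at hs
  have hnceB : ¬ isCodonEnd B' (A'.length - 1) := by
    rintro ⟨-, -, -, -, -, hmod⟩
    rw [(by omega : A'.length - 1 + 1 = A'.length)] at hmod
    exact hnB hmod
  have hdAlen : A'.dropLast.length = A'.length - 1 := by rw [List.length_dropLast]
  have hdBlen : B'.dropLast.length = A'.length - 1 := by rw [List.length_dropLast, hBn]
  have hkB : ∀ k, k < A'.length - 1 → k < B'.length - 1 := fun k hk => by omega
  -- set equalities (A'-side)
  have hM1 : Mset A'.dropLast B'.dropLast = Mset A' B' := by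
    unfold Mset; rw [hdAlen]
    refine filter_range_shrink A'.length _ _ (fun k hk => ?_) (fun h => hnceA h.1)
    exact and_congr (isCodonEnd_dropLast A' k hk) (isCodonEnd_dropLast B' k (hkB k hk))
  have hU1 : Uset A'.dropLast B'.dropLast = Uset A' B' := by
    unfold Uset; rw [hdAlen]
    refine filter_range_shrink A'.length _ _ (fun k hk => ?_) (fun h => hnceA h.1)
    rw [isCodonEnd_dropLast A' k hk, isCodonEnd_dropLast B' k (hkB k hk),
      getD_dropLast B' (k-2) (hkB _ (by omega)), getD_dropLast B' (k-1) (hkB _ (by omega)),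
      getD_dropLast B' k (hkB k hk)]
  have hI1 : IndelSet A'.dropLast B'.dropLast = IndelSet A' B' := by
    unfold IndelSet; rw [hdAlen]
    refine filter_range_shrink A'.length _ _ (fun k hk => ?_) (fun h => hnceA h.1)
    rw [isCodonEnd_dropLast A' k hk,
      getD_dropLast B' (k-2) (hkB _ (by omega)), getD_dropLast B' (k-1) (hkB _ (by omega)),
      getD_dropLast B' k (hkB k hk)]
  have hMFS1 : MFSset A'.dropLast B'.dropLast = MFSset A' B' := by
    unfold MFSset; rw [hdAlen]
    refine filter_range_shrink A'.length _ _ (fun k hk => ?_) (fun h => ?_)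
    · rw [hM1, hU1, hI1, getD_dropLast A' k hk, getD_dropLast B' k (hkB k hk)]
    · obtain ⟨-, hs, -⟩ := h; rw [hAnone] at hs; simp at hs
  -- set equalities (B'-side)
  have hM2 : Mset B'.dropLast A'.dropLast = Mset B' A' := by
    unfold Mset; rw [hdBlen, hBn]
    refine filter_range_shrink A'.length _ _ (fun k hk => ?_) (fun h => hnceB h.1)
    exact and_congr (isCodonEnd_dropLast B' k (hkB k hk)) (isCodonEnd_dropLast A' k hk)
  have hU2 : Uset B'.dropLast A'.dropLast = Uset B' A' := by
    unfold Uset; rw [hdBlen, hBn]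
    refine filter_range_shrink A'.length _ _ (fun k hk => ?_) (fun h => hnceB h.1)
    rw [isCodonEnd_dropLast B' k (hkB k hk), isCodonEnd_dropLast A' k hk,
      getD_dropLast A' (k-2) (by omega), getD_dropLast A' (k-1) (by omega),
      getD_dropLast A' k hk]
  have hI2 : IndelSet B'.dropLast A'.dropLast = IndelSet B' A' := by
    unfold IndelSet; rw [hdBlen, hBn]
    refine filter_range_shrink A'.length _ _ (fun k hk => ?_) (fun h => hnceB h.1)
    rw [isCodonEnd_dropLast B' k (hkB k hk),
      getD_dropLast A' (k-2) (by omega), getD_dropLast A' (k-1) (by omega),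
      getD_dropLast A' k hk]
  have hMFS2 : MFSset B'.dropLast A'.dropLast = MFSset B' A' := by
    unfold MFSset; rw [hdBlen, hBn]
    refine filter_range_shrink A'.length _ _ (fun k hk => ?_) (fun h => ?_)
    · rw [hM2, hU2, hI2, getD_dropLast B' k (hkB k hk), getD_dropLast A' k hk]
    · obtain ⟨-, -, hs⟩ := h; rw [hAnone] at hs; simp at hs
  -- bounds on members
  have eM1 : ∀ k ∈ Mset A' B', k < A'.length - 1 := by
    intro k hk
    simp only [Mset, Finset.mem_filter, Finset.mem_range] at hk
    by_contra h
    exact hnceA ((by omega : k = A'.length - 1) ▸ hk.2.1)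
  have eU1 : ∀ k ∈ Uset A' B', k < A'.length - 1 := by
    intro k hk
    simp only [Uset, Finset.mem_filter, Finset.mem_range] at hk
    by_contra h
    exact hnceA ((by omega : k = A'.length - 1) ▸ hk.2.1)
  have eMFS1 : ∀ k ∈ MFSset A' B', k < A'.length - 1 := by
    intro k hk
    simp only [MFSset, Finset.mem_filter, Finset.mem_range] at hk
    by_contra h
    have := hk.2.2.1
    rw [(by omega : k = A'.length - 1), hAnone] at this
    simp at this
  have eM2 : ∀ k ∈ Mset B' A', k < A'.length - 1 := by
    intro k hk
    simp only [Mset, Finset.mem_filter, Finset.mem_range] at hk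
    by_contra h
    exact hnceB ((by omega : k = A'.length - 1) ▸ hk.2.1)
  have eU2 : ∀ k ∈ Uset B' A', k < A'.length - 1 := by
    intro k hk
    simp only [Uset, Finset.mem_filter, Finset.mem_range] at hk
    by_contra h
    exact hnceB ((by omega : k = A'.length - 1) ▸ hk.2.1)
  have eMFS2 : ∀ k ∈ MFSset B' A', k < A'.length - 1 := by
    intro k hk
    simp only [MFSset, Finset.mem_filter, Finset.mem_range] at hk
    by_contra h
    have := hk.2.2.2
    rw [(by omega : k = A'.length - 1), hAnone] at this
    simp at this
  -- filterMap lengths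
  have hfA : A'.dropLast.filterMap id = A'.filterMap id := filterMap_dropLast_none hlA
  have hfBlen : (B'.dropLast.filterMap id).length + 1 = (B'.filterMap id).length := by
    rw [filterMap_dropLast_some hlB]; simp
  have hdiv : (B'.dropLast.filterMap id).length / 3 = (B'.filterMap id).length / 3 := by
    omega
  -- half scores
  have half1 : halfScore P A'.dropLast B'.dropLast = halfScore P A' B' := by
    have e1 : (∑ k ∈ Mset A' B', P.saa (triAt A'.dropLast k) (triAt B'.dropLast k) / 2)
        = ∑ k ∈ Mset A' B', P.saa (triAt A' k) (triAt B' k) / 2 :=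
      Finset.sum_congr rfl fun k hk => by
        rw [triAt_dropLast A' k (eM1 k hk), triAt_dropLast B' k (by have := eM1 k hk; omega)]
    have e2 : (∑ k ∈ Uset A' B', (P.saa (triAt A'.dropLast k) (triAt B'.dropLast k) / 2 + P.fs_ext_cost))
        = ∑ k ∈ Uset A' B', (P.saa (triAt A' k) (triAt B' k) / 2 + P.fs_ext_cost) :=
      Finset.sum_congr rfl fun k hk => by
        rw [triAt_dropLast A' k (eU1 k hk), triAt_dropLast B' k (by have := eU1 k hk; omega)]
    have e3 : (∑ k ∈ MFSset A' B', P.san (nucAt A'.dropLast k) (nucAt B'.dropLast k) / 2)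
        = ∑ k ∈ MFSset A' B', P.san (nucAt A' k) (nucAt B' k) / 2 :=
      Finset.sum_congr rfl fun k hk => by
        rw [nucAt_dropLast A' k (eMFS1 k hk), nucAt_dropLast B' k (by have := eMFS1 k hk; omega)]
    unfold halfScore
    rw [hM1, hU1, hI1, hMFS1, hfA, e1, e2, e3]
  have half2 : halfScore P B'.dropLast A'.dropLast = halfScore P B' A' := by
    have e1 : (∑ k ∈ Mset B' A', P.saa (triAt B'.dropLast k) (triAt A'.dropLast k) / 2)
        = ∑ k ∈ Mset B' A', P.saa (triAt B' k) (triAt A' k) / 2 :=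
      Finset.sum_congr rfl fun k hk => by
        rw [triAt_dropLast B' k (by have := eM2 k hk; omega), triAt_dropLast A' k (eM2 k hk)]
    have e2 : (∑ k ∈ Uset B' A', (P.saa (triAt B'.dropLast k) (triAt A'.dropLast k) / 2 + P.fs_ext_cost))
        = ∑ k ∈ Uset B' A', (P.saa (triAt B' k) (triAt A' k) / 2 + P.fs_ext_cost) :=
      Finset.sum_congr rfl fun k hk => by
        rw [triAt_dropLast B' k (by have := eU2 k hk; omega), triAt_dropLast A' k (eU2 k hk)]
    have e3 : (∑ k ∈ MFSset B' A', P.san (nucAt B'.dropLast k) (nucAt A'.dropLast k) / 2)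
        = ∑ k ∈ MFSset B' A', P.san (nucAt B' k) (nucAt A' k) / 2 :=
      Finset.sum_congr rfl fun k hk => by
        rw [nucAt_dropLast B' k (by have := eMFS2 k hk; omega), nucAt_dropLast A' k (eMFS2 k hk)]
    unfold halfScore
    rw [hM2, hU2, hI2, hMFS2, hdiv, e1, e2, e3]
  unfold score
  rw [half1, half2]

end Aux2

section Aux3

lemma take_pred (B : List Nuc) (j : ℕ) (hj1 : 1 ≤ j) (hjm : j ≤ B.length) :
    B.take j = B.take (j-1) ++ [B.getD (j-1) 0] := by
  obtain ⟨k, rfl⟩ : ∃ k, j = k + 1 := ⟨j - 1, by omega⟩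
  rw [List.take_succ]
  simp [List.getD_eq_getElem?_getD, List.getElem?_eq_getElem (show k < B.length by omega)]

lemma align_dropLast (A B : List Nuc) (i j : ℕ) (hjm : j ≤ B.length) (hj1 : 1 ≤ j)
    (A' B' : List Col) (x : Nuc) (hal : isAlignment (A.take i) (B.take j) A' B')
    (hlA : A'.getLast? = some none) (hlB : B'.getLast? = some (some x)) :
    isAlignment (A.take i) (B.take (j-1)) A'.dropLast B'.dropLast := by
  obtain ⟨hlen, hz, hfA, hfB⟩ := hal
  refine ⟨by simp [hlen], ?_, ?_, ?_⟩
  · intro p hp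
    apply hz
    have hzz : A'.zip B' = A'.dropLast.zip B'.dropLast ++ [((none : Col), (some x : Col))] := by
      conv_lhs => rw [← concat_of_getLast? hlA, ← concat_of_getLast? hlB]
      rw [List.zip_append (by simp [hlen])]
      simp
    rw [hzz]
    exact List.mem_append_left _ hp
  · rw [filterMap_dropLast_none hlA, hfA]
  · have h1 : B'.dropLast.filterMap id ++ [x] = B.take j := by
      rw [← filterMap_dropLast_some hlB, hfB]
    have h2 : B'.dropLast.filterMap id = (B.take j).dropLast := by
      rw [← h1, List.dropLast_concat]
    rw [h2, List.dropLast_eq_take, List.length_take, List.take_take]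
    congr 1
    omega

lemma align_extend (A B : List Nuc) (i j : ℕ) (hjm : j ≤ B.length) (hj1 : 1 ≤ j)
    (A'' B'' : List Col) (hal : isAlignment (A.take i) (B.take (j-1)) A'' B'') :
    isAlignment (A.take i) (B.take j) (A'' ++ [none]) (B'' ++ [some (B.getD (j-1) 0)]) := by
  obtain ⟨hlen, hz, hfA, hfB⟩ := hal
  refine ⟨by simp [hlen], ?_, by rw [List.filterMap_append, hfA]; simp, ?_⟩
  · intro p hp
    rw [List.zip_append hlen] at hp
    rcases List.mem_append.1 hp with h | h
    · exact hz p h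
    · have : p = ((none : Col), (some (B.getD (j-1) 0) : Col)) := by simpa using h
      rw [this]
      simp
  · rw [List.filterMap_append, hfB]
    simpa using (take_pred B j hj1 hjm).symm

lemma len_le_of_align (A' : List Col) : ∀ (B' : List Col), A'.length = B'.length →
    (∀ p ∈ A'.zip B', p.1 ≠ none ∨ p.2 ≠ none) →
    A'.length ≤ (A'.filterMap id).length + (B'.filterMap id).length := by
  induction A' with
  | nil => simp
  | cons a as ih =>
    intro B' hlen h
    cases B' with
    | nil => simp at hlen
    | cons b bs =>
      have hlen' : as.length = bs.length := by simpa using hlen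
      have h' : ∀ p ∈ as.zip bs, p.1 ≠ none ∨ p.2 ≠ none := fun p hp =>
        h p (by rw [List.zip_cons_cons]; exact List.mem_cons_of_mem _ hp)
      have hab := h (a, b) (by rw [List.zip_cons_cons]; exact List.mem_cons_self)
      have hih := ih bs hlen' h'
      rcases a with _ | va <;> rcases b with _ | vb
      · exact absurd hab (by simp)
      all_goals simp only [List.filterMap_cons, id_eq, List.length_cons, List.length] <;> simp at hih ⊢ <;> omega

lemma bddAbove_scores (P : ScoreParams) (a b : List Nuc) :
    BddAbove {s | ∃ A' B', isAlignment a b A' B' ∧ s = score P A' B'} := by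
  apply Set.Finite.bddAbove
  apply Set.Finite.subset (Set.Finite.image (fun p : List Col × List Col => score P p.1 p.2)
    ((List.finite_length_le Col (a.length + b.length)).prod
      (List.finite_length_le Col (a.length + b.length))))
  rintro s ⟨A', B', ⟨hlen, hz, hfA, hfB⟩, rfl⟩
  have h1 : A'.length ≤ a.length + b.length := by
    have := len_le_of_align A' B' hlen hz
    rwa [hfA, hfB] at this
  exact ⟨(A', B'), ⟨h1, by simpa [← hlen] using h1⟩, rfl⟩

end Aux3

/-- if `i ≡ 0 (mod 3)`, `j ≢ 0 (mod 3)`, and an optimal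
alignment between `A[1..i]` and `B[1..j]` has a last column aligning `B[j]`
with a gap, then `D(i,j) = D(i,j-1)`, and removing the last column yields an
optimal alignment of `A[1..i]` and `B[1..j-1]` of the same score. -/
theorem last_column_gap (P : ScoreParams) (A B : List Nuc) (i j : ℕ)
    (hi : i % 3 = 0) (hj : j % 3 ≠ 0) (hin : i ≤ A.length) (hjm : j ≤ B.length)
    (hj1 : 1 ≤ j)
    (A' B' : List Col) (hal : isAlignment (A.take i) (B.take j) A' B')
    (hopt : score P A' B' = Dopt P A B i j)
    (hlastA : A'.getLast? = some none)
    (hlastB : B'.getLast? = some (some (B.getD (j-1) 0))) :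
    Dopt P A B i j = Dopt P A B i (j-1) ∧
    score P A'.dropLast B'.dropLast = Dopt P A B i (j-1) := by
  have hBtake : (B.take j).length = j := by
    rw [List.length_take]; omega
  have h3 : (B'.filterMap id).length % 3 ≠ 0 := by
    rw [hal.2.2.2, hBtake]; exact hj
  have hsc : score P A'.dropLast B'.dropLast = score P A' B' :=
    score_dropLast P A' B' _ hal.1 hlastA hlastB h3
  have hal' : isAlignment (A.take i) (B.take (j-1)) A'.dropLast B'.dropLast :=
    align_dropLast A B i j hjm hj1 A' B' _ hal hlastA hlastB
  have hgreat : IsGreatest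
      {s | ∃ A'' B'', isAlignment (A.take i) (B.take (j-1)) A'' B'' ∧ s = score P A'' B''}
      (score P A' B') := by
    constructor
    · exact ⟨A'.dropLast, B'.dropLast, hal', hsc.symm⟩
    · rintro s ⟨A'', B'', halg, rfl⟩
      have hext := align_extend A B i j hjm hj1 A'' B'' halg
      have hBlen' : (B''.filterMap id).length = j - 1 := by
        rw [halg.2.2.2, List.length_take]; omega
      have hsc2 : score P A'' B'' = score P (A'' ++ [none]) (B'' ++ [some (B.getD (j-1) 0)]) := by
        have := score_dropLast P (A'' ++ [none]) (B'' ++ [some (B.getD (j-1) 0)])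
          (B.getD (j-1) 0) (by simp [halg.1]) List.getLast?_concat List.getLast?_concat
          (by rw [List.filterMap_append, List.length_append, hBlen']; show (j - 1 + 1) % 3 ≠ 0; omega)
        rwa [List.dropLast_concat, List.dropLast_concat] at this
      have hle : score P (A'' ++ [none]) (B'' ++ [some (B.getD (j-1) 0)]) ≤ Dopt P A B i j :=
        le_csSup (bddAbove_scores P (A.take i) (B.take j))
          ⟨_, _, hext, rfl⟩
      rw [hsc2, hopt]
      exact hle
  have hD : Dopt P A B i (j-1) = score P A' B' := hgreat.csSup_eq
  exact ⟨by rw [← hopt, hD], by rw [hsc, hD]⟩
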